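/- Let Λ_K be a symmetric positive definite d×d matrix, K a polytope with k faces, and define v_K : ℝ^k → ℝ^d by |K| Λ_K v_K(F) = −Σ_{σ} |σ| F_σ (x̄_σ − x_K) and T_{K,σ}(F) = F_σ + Λ_K v_K(F) · n_{K,σ}. Let N be the k×d matrix with rows ((Λ_K)_j · n_{K,σ})_σ in column j (i.e. N has rows (Λ_K n_{K,σ})^T). Then the kernel of the linear map T_K : ℝ^k → ℝ^k equals the image of N, and T_K has rank k − d. -/

import Mathlib

open Matrix BigOperators

/-- Lemma 3.2 of the paper: with `v_K` defined by `|K| Λ v_K(F) = -Σ_σ |σ| F_σ (x̄_σ - x_K)`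
and `T_{K,σ}(F) = F_σ + Λ v_K(F)·n_σ`, the kernel of `T_K` equals the image of the
matrix `N` with rows `(Λ n_σ)^T`, and `T_K` has rank `k - d`. -/
theorem stmt8 (d k : ℕ) (area : Fin k → ℝ) (harea : ∀ σ, 0 < area σ)
    (n xbar : Fin k → (Fin d → ℝ)) (xK : Fin d → ℝ) (volK : ℝ) (hvol : 0 < volK)
    (Λ : Matrix (Fin d) (Fin d) ℝ) (hΛ : Λ.PosDef)
    (hspan : Submodule.span ℝ (Set.range fun σ => xbar σ - xK) = ⊤)
    (hmagic : ∀ e : Fin d → ℝ,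
      volK • e = ∑ σ, (area σ * (e ⬝ᵥ n σ)) • (xbar σ - xK))
    (vK : (Fin k → ℝ) →ₗ[ℝ] (Fin d → ℝ))
    (hv : ∀ F, volK • (Λ *ᵥ vK F) = -∑ σ, (area σ * F σ) • (xbar σ - xK))
    (TK : (Fin k → ℝ) →ₗ[ℝ] (Fin k → ℝ))
    (hT : ∀ F σ, TK F σ = F σ + (Λ *ᵥ vK F) ⬝ᵥ n σ)
    (N : Matrix (Fin k) (Fin d) ℝ) (hN : ∀ σ j, N σ j = (Λ *ᵥ n σ) j) :
    LinearMap.ker TK = LinearMap.range N.mulVecLin ∧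
      Module.finrank ℝ (LinearMap.range TK) = k - d := by
  have hvol' : volK ≠ 0 := ne_of_gt hvol
  have hsymm : ∀ a b : Fin d → ℝ, (Λ *ᵥ a) ⬝ᵥ b = (Λ *ᵥ b) ⬝ᵥ a := by
    intro a b
    have hHerm : Λᵀ = Λ := by
      have := hΛ.1
      simpa [Matrix.IsHermitian] using this
    rw [dotProduct_comm ((Λ *ᵥ a)) b, Matrix.dotProduct_mulVec,
      ← Matrix.mulVec_transpose, hHerm]
  have hΛinj : ∀ x : Fin d → ℝ, Λ *ᵥ x = 0 → x = 0 := by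
    intro x hx
    by_contra h
    have := hΛ.dotProduct_mulVec_pos h
    rw [hx] at this
    simp at this
  have hNe : ∀ (e : Fin d → ℝ) σ, (N *ᵥ e) σ = (Λ *ᵥ e) ⬝ᵥ n σ := by
    intro e σ
    have h1 : (N *ᵥ e) σ = (Λ *ᵥ n σ) ⬝ᵥ e := by
      simp [Matrix.mulVec, dotProduct, hN]
    rw [h1, hsymm]
  have hvNe : ∀ e : Fin d → ℝ, vK (N *ᵥ e) = -e := by
    intro e
    have h1 := hv (N *ᵥ e)
    have h2 := hmagic (Λ *ᵥ e)
    have h3 : volK • (Λ *ᵥ vK (N *ᵥ e)) = volK • (Λ *ᵥ (-e)) := by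
      rw [h1]
      rw [Finset.sum_congr rfl fun σ _ => by rw [hNe], ← h2]
      rw [Matrix.mulVec_neg]
      simp
    have h4 : Λ *ᵥ vK (N *ᵥ e) = Λ *ᵥ (-e) :=
      smul_right_injective _ hvol' h3
    have h5 : Λ *ᵥ (vK (N *ᵥ e) - (-e)) = 0 := by
      rw [Matrix.mulVec_sub, h4, sub_self]
    exact sub_eq_zero.mp (hΛinj _ h5)
  have hker : LinearMap.ker TK = LinearMap.range N.mulVecLin := by
    ext F
    constructor
    · intro hF
      rw [LinearMap.mem_ker] at hF
      refine ⟨-(vK F), ?_⟩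
      funext σ
      have hTF : TK F σ = 0 := by rw [hF]; rfl
      rw [hT F σ] at hTF
      have : (N.mulVecLin) (-(vK F)) σ = (Λ *ᵥ (-(vK F))) ⬝ᵥ n σ := hNe _ σ
      rw [Matrix.mulVecLin_apply] at this ⊢
      rw [this, Matrix.mulVec_neg, neg_dotProduct]
      linarith
    · rintro ⟨e, rfl⟩
      rw [LinearMap.mem_ker]
      funext σ
      rw [Matrix.mulVecLin_apply] at *
      rw [hT, hvNe e, hNe e σ, Matrix.mulVec_neg, neg_dotProduct]
      simp
  have hNinj : Function.Injective N.mulVecLin := by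
    rw [← LinearMap.ker_eq_bot]
    rw [LinearMap.ker_eq_bot']
    intro e he
    rw [Matrix.mulVecLin_apply] at he
    have h2 := hmagic (Λ *ᵥ e)
    have : ∀ σ, (area σ * ((Λ *ᵥ e) ⬝ᵥ n σ)) • (xbar σ - xK) = 0 := by
      intro σ
      have : (Λ *ᵥ e) ⬝ᵥ n σ = 0 := by rw [← hNe e σ, he]; rfl
      rw [this]; simp
    rw [Finset.sum_congr rfl fun σ _ => this σ] at h2
    simp only [Finset.sum_const_zero] at h2
    have hΛe : Λ *ᵥ e = 0 := by
      have := smul_eq_zero.mp h2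
      tauto
    exact hΛinj _ hΛe
  have hkerd : Module.finrank ℝ (LinearMap.ker TK) = d := by
    rw [hker, LinearMap.finrank_range_of_inj hNinj]
    simp
  have hdk : d ≤ k := by
    have h1 : Module.finrank ℝ (LinearMap.ker TK) ≤ Module.finrank ℝ (Fin k → ℝ) :=
      Submodule.finrank_le _
    rw [hkerd] at h1
    simpa using h1
  refine ⟨hker, ?_⟩
  have hrn := LinearMap.finrank_range_add_finrank_ker TK
  rw [hkerd] at hrn
  simp only [Module.finrank_pi, Fintype.card_fin] at hrn
  omega
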